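/- (Excess secret key can be useful.) There exist finite alphabets 𝒳, 𝒴, 𝒵, a pmf p₀ on 𝒳, a payoff function π : 𝒳 × 𝒴 × 𝒵 → ℝ, and rates R ≥ 0 and R₀ > R such that Γ_{p₀,π}(R₀, R) > Γ_{p₀,π}(R, R); that is, a secret key rate strictly exceeding the public communication rate yields a strictly larger single-letter value than a key rate equal to the communication rate. -/

import Mathlib

open scoped BigOperators Classical

noncomputable section

/-! ### Finite probability basics -/

/-- A probability mass function on a finite type, given as a real-valued function. -/
def IsPMF {α : Type} [Fintype α] (p : α → ℝ) : Prop :=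
  (∀ a, 0 ≤ p a) ∧ ∑ a, p a = 1

/-- The probability that the random variable `A` takes the value `a` under the pmf `p`. -/
def probOf {Ω : Type} {α : Type} [Fintype Ω] (p : Ω → ℝ) (A : Ω → α) (a : α) : ℝ :=
  ∑ ω, if A ω = a then p ω else 0

/-- Shannon entropy (in bits) of the random variable `A` under the pmf `p`. -/
def entropy {Ω α : Type} [Fintype Ω] [Fintype α] (p : Ω → ℝ) (A : Ω → α) : ℝ :=
  -∑ a, probOf p A a * Real.logb 2 (probOf p A a)

/-- Conditional Shannon entropy `H(A | C)` (in bits). -/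
def condEntropy {Ω α γ : Type} [Fintype Ω] [Fintype α] [Fintype γ]
    (p : Ω → ℝ) (A : Ω → α) (C : Ω → γ) : ℝ :=
  entropy p (fun ω => (A ω, C ω)) - entropy p C

/-- Shannon mutual information `I(A;B)` (in bits). -/
def mutualInfo {Ω α β : Type} [Fintype Ω] [Fintype α] [Fintype β]
    (p : Ω → ℝ) (A : Ω → α) (B : Ω → β) : ℝ :=
  entropy p A + entropy p B - entropy p (fun ω => (A ω, B ω))

/-- Conditional Shannon mutual information `I(A;B|C)` (in bits). -/
def condMutualInfo {Ω α β γ : Type} [Fintype Ω] [Fintype α] [Fintype β] [Fintype γ]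
    (p : Ω → ℝ) (A : Ω → α) (B : Ω → β) (C : Ω → γ) : ℝ :=
  entropy p (fun ω => (A ω, C ω)) + entropy p (fun ω => (B ω, C ω))
    - entropy p (fun ω => (A ω, B ω, C ω)) - entropy p C

/-- Conditional independence `A ⟂ B | C` under the pmf `p`:
`P(A=a, B=b, C=c) · P(C=c) = P(A=a, C=c) · P(B=b, C=c)` for all `a, b, c`. -/
def CondIndep {Ω α β γ : Type} [Fintype Ω] (p : Ω → ℝ)
    (A : Ω → α) (B : Ω → β) (C : Ω → γ) : Prop :=
  ∀ a b c,
    probOf p (fun ω => (A ω, B ω, C ω)) (a, b, c) * probOf p C c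
      = probOf p (fun ω => (A ω, C ω)) (a, c) * probOf p (fun ω => (B ω, C ω)) (b, c)

/-! ### Coordination schemes and adversaries -/

/-- Cardinality of the secret-key alphabet: `max 1 ⌊2^{n R₀}⌋`. -/
def keyCard (R0 : ℝ) (n : ℕ) : ℕ := max 1 ⌊(2 : ℝ) ^ ((n : ℝ) * R0)⌋₊

/-- Cardinality of the message alphabet: `max 1 ⌊2^{n R}⌋`. -/
def msgCard (R : ℝ) (n : ℕ) : ℕ := max 1 ⌊(2 : ℝ) ^ ((n : ℝ) * R)⌋₊

/-- An `(R₀, R, n)` coordination scheme: a randomized encoder `p(j | xⁿ, k)` and a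
randomized causal decoder `{p(yᵢ | j, k, x^{i-1}, y^{i-1}, z^{i-1})}`. -/
structure Scheme (X Y Z : Type) [Fintype X] [Fintype Y] [Fintype Z]
    (R0 R : ℝ) (n : ℕ) where
  enc : (Fin n → X) → Fin (keyCard R0 n) → Fin (msgCard R n) → ℝ
  enc_pmf : ∀ x k, IsPMF (enc x k)
  dec : Fin n → Fin (msgCard R n) → Fin (keyCard R0 n) →
      (Fin n → X) → (Fin n → Y) → (Fin n → Z) → Y → ℝ
  dec_pmf : ∀ i j k x y z, IsPMF (dec i j k x y z)
  dec_causal : ∀ i j k x y z x' y' z',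
      (∀ m, m < i → x m = x' m) → (∀ m, m < i → y m = y' m) →
      (∀ m, m < i → z m = z' m) →
      dec i j k x y z = dec i j k x' y' z'

/-- An adversary strategy with full causal information:
`{p(zᵢ | j, x^{i-1}, y^{i-1}, z^{i-1})}`. -/
structure Adversary (X Y Z : Type) [Fintype X] [Fintype Y] [Fintype Z]
    (R : ℝ) (n : ℕ) where
  adv : Fin n → Fin (msgCard R n) →
      (Fin n → X) → (Fin n → Y) → (Fin n → Z) → Z → ℝ
  adv_pmf : ∀ i j x y z, IsPMF (adv i j x y z)
  adv_causal : ∀ i j x y z x' y' z',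
      (∀ m, m < i → x m = x' m) → (∀ m, m < i → y m = y' m) →
      (∀ m, m < i → z m = z' m) →
      adv i j x y z = adv i j x' y' z'

/-- Sample space of a block of length `n`: `(Xⁿ, K, J, Yⁿ, Zⁿ)`. -/
abbrev Outc (X Y Z : Type) (R0 R : ℝ) (n : ℕ) : Type :=
  (Fin n → X) × Fin (keyCard R0 n) × Fin (msgCard R n) × (Fin n → Y) × (Fin n → Z)

/-- The induced joint pmf of `(Xⁿ, K, J, Yⁿ, Zⁿ)`:
`p₀ⁿ(xⁿ)·|𝒦|⁻¹·p(j|xⁿ,k)·∏ᵢ p(yᵢ|j,k,x^{i-1},y^{i-1},z^{i-1})·p(zᵢ|j,x^{i-1},y^{i-1},z^{i-1})`. -/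
def jointPMF {X Y Z : Type} [Fintype X] [Fintype Y] [Fintype Z] {R0 R : ℝ} {n : ℕ}
    (p0 : X → ℝ) (S : Scheme X Y Z R0 R n) (A : Adversary X Y Z R n) :
    Outc X Y Z R0 R n → ℝ :=
  fun ω => (∏ i, p0 (ω.1 i)) * ((keyCard R0 n : ℝ))⁻¹ *
    S.enc ω.1 ω.2.1 ω.2.2.1 *
    ∏ i, S.dec i ω.2.2.1 ω.2.1 ω.1 ω.2.2.2.1 ω.2.2.2.2 (ω.2.2.2.1 i) *
      A.adv i ω.2.2.1 ω.1 ω.2.2.2.1 ω.2.2.2.2 (ω.2.2.2.2 i)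

/-- The expected average payoff `E[(1/n) Σᵢ π(Xᵢ, Yᵢ, Zᵢ)]`. -/
def avgValue {X Y Z : Type} [Fintype X] [Fintype Y] [Fintype Z] {R0 R : ℝ} {n : ℕ}
    (p0 : X → ℝ) (π : X → Y → Z → ℝ)
    (S : Scheme X Y Z R0 R n) (A : Adversary X Y Z R n) : ℝ :=
  ∑ ω : Outc X Y Z R0 R n, jointPMF p0 S A ω *
    ((n : ℝ)⁻¹ * ∑ i, π (ω.1 i) (ω.2.2.2.1 i) (ω.2.2.2.2 i))

/-- The robust achievable value `Π_{p₀}(R₀, R)`: the supremum over blocklengths and schemes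
of the least average payoff over all (fully informed) adversary strategies. -/
def robustValue {X Y Z : Type} [Fintype X] [Fintype Y] [Fintype Z]
    (p0 : X → ℝ) (π : X → Y → Z → ℝ) (R0 R : ℝ) : ℝ :=
  ⨆ (n : ℕ) (_ : 0 < n) (S : Scheme X Y Z R0 R n),
    ⨅ A : Adversary X Y Z R n, avgValue p0 π S A

/-! ### Single-letter quantities -/

/-- The single-letter joint pmf of `(X, Y, U, V)` built from the source `p₀` and a
conditional pmf `p(y,u,v|x)`. -/
def slJoint {X Y U V : Type} (p0 : X → ℝ) (w : X → Y × U × V → ℝ) :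
    X × Y × U × V → ℝ :=
  fun q => p0 q.1 * w q.1 q.2

/-- Membership in the single-letter region `𝒫_{p₀}(R₀,R)`: `p(y,u,v|x)` is a conditional pmf,
`X — (U,V) — Y` is a Markov chain, `R₀ ≥ I(X,Y;V|U)` and `R ≥ I(X;U,V)`. -/
def memP {X Y U V : Type} [Fintype X] [Fintype Y] [Fintype U] [Fintype V]
    (p0 : X → ℝ) (w : X → Y × U × V → ℝ) (R0 R : ℝ) : Prop :=
  (∀ x, IsPMF (w x)) ∧
  CondIndep (slJoint p0 w) (fun q => q.1) (fun q => q.2.1) (fun q => q.2.2) ∧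
  R0 ≥ condMutualInfo (slJoint p0 w)
      (fun q => (q.1, q.2.1)) (fun q => q.2.2.2) (fun q => q.2.2.1) ∧
  R ≥ mutualInfo (slJoint p0 w) (fun q => q.1) (fun q => q.2.2)

/-- The expected payoff `E[π(X, Y, z(U))]` when the adversary plays a function `z : U → Z`. -/
def slPayoff {X Y Z U V : Type} [Fintype X] [Fintype Y] [Fintype U] [Fintype V]
    (p0 : X → ℝ) (w : X → Y × U × V → ℝ) (π : X → Y → Z → ℝ) (z : U → Z) : ℝ :=
  ∑ q : X × Y × U × V, slJoint p0 w q * π q.1 q.2.1 (z q.2.2.1)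

/-- The single-letter value `Γ_{p₀,π}(R₀,R)`: the supremum over finite auxiliary alphabets
`𝒰, 𝒱` and conditional pmfs `p(y,u,v|x) ∈ 𝒫_{p₀}(R₀,R)` of `min_{z : 𝒰 → 𝒵} E[π(X,Y,z(U))]`. -/
def Gamma {X Y Z : Type} [Fintype X] [Fintype Y] [Fintype Z]
    (p0 : X → ℝ) (π : X → Y → Z → ℝ) (R0 R : ℝ) : ℝ :=
  sSup {v : ℝ | ∃ (U V : Type) (_ : Fintype U) (_ : Fintype V)
    (w : X → Y × U × V → ℝ), memP p0 w R0 R ∧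
    v = ⨅ z : U → Z, slPayoff p0 w π z}



/-! ### Auxiliary development -/

namespace ESK

open Real Finset

variable {Ω α β γ : Type} [Fintype Ω] [Fintype α] [Fintype β] [Fintype γ]

lemma probOf_nonneg (p : Ω → ℝ) (hp : ∀ ω, 0 ≤ p ω) (A : Ω → α) (a : α) :
    0 ≤ probOf p A a :=
  Finset.sum_nonneg fun ω _ => by by_cases h : A ω = a <;> simp [h, hp ω]

lemma sum_probOf (p : Ω → ℝ) (A : Ω → α) : ∑ a, probOf p A a = ∑ ω, p ω := by
  unfold probOf
  rw [Finset.sum_comm]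
  exact Finset.sum_congr rfl fun ω _ => by simp

lemma probOf_inj (p : Ω → ℝ) (e : Ω → α) (he : Function.Injective e) (ω0 : Ω) :
    probOf p e (e ω0) = p ω0 := by
  unfold probOf
  rw [Finset.sum_eq_single ω0]
  · simp
  · intro ω _ hne
    exact if_neg fun h => hne (he h)
  · intro h; exact absurd (Finset.mem_univ ω0) h

lemma marg_right (p : Ω → ℝ) (A : Ω → α) (B : Ω → β) (a : α) :
    probOf p A a = ∑ b, probOf p (fun ω => (A ω, B ω)) (a, b) := by
  unfold probOf
  rw [Finset.sum_comm]
  refine Finset.sum_congr rfl fun ω _ => ?_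
  by_cases h : A ω = a <;> simp [Prod.ext_iff, h]

lemma marg_left (p : Ω → ℝ) (A : Ω → α) (B : Ω → β) (b : β) :
    probOf p B b = ∑ a, probOf p (fun ω => (A ω, B ω)) (a, b) := by
  unfold probOf
  rw [Finset.sum_comm]
  refine Finset.sum_congr rfl fun ω _ => ?_
  by_cases h : B ω = b <;> simp [Prod.ext_iff, h]

lemma marg_mid (p : Ω → ℝ) (A : Ω → α) (B : Ω → β) (C : Ω → γ) (a : α) (c : γ) :
    probOf p (fun ω => (A ω, C ω)) (a, c)
      = ∑ b, probOf p (fun ω => (A ω, B ω, C ω)) (a, b, c) := by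
  unfold probOf
  rw [Finset.sum_comm]
  refine Finset.sum_congr rfl fun ω _ => ?_
  by_cases h1 : A ω = a <;> by_cases h2 : C ω = c <;> simp [Prod.ext_iff, h1, h2]

lemma sum_rot (f : α → β → γ → ℝ) :
    ∑ a, ∑ b, ∑ c, f a b c = ∑ b, ∑ c, ∑ a, f a b c := by
  rw [Finset.sum_comm]
  exact Finset.sum_congr rfl fun b _ => Finset.sum_comm

lemma sum_rot2 (f : α → β → γ → ℝ) :
    ∑ a, ∑ b, ∑ c, f a b c = ∑ c, ∑ b, ∑ a, f a b c := by
  rw [sum_rot, Finset.sum_comm]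

/-- Mutual information in sum (log-ratio) form. -/
lemma MI_eq (p : Ω → ℝ) (A : Ω → α) (B : Ω → β) :
    mutualInfo p A B = ∑ a, ∑ b, probOf p (fun ω => (A ω, B ω)) (a, b) *
      (Real.logb 2 (probOf p (fun ω => (A ω, B ω)) (a, b))
        - Real.logb 2 (probOf p A a) - Real.logb 2 (probOf p B b)) := by
  have hA : entropy p A
      = -∑ a, ∑ b, probOf p (fun ω => (A ω, B ω)) (a, b) * Real.logb 2 (probOf p A a) := by
    unfold entropy
    congr 1
    refine Finset.sum_congr rfl fun a _ => ?_
    rw [marg_right p A B a, Finset.sum_mul]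
  have hB : entropy p B
      = -∑ a, ∑ b, probOf p (fun ω => (A ω, B ω)) (a, b) * Real.logb 2 (probOf p B b) := by
    unfold entropy
    congr 1
    rw [Finset.sum_comm]
    refine Finset.sum_congr rfl fun b _ => ?_
    rw [marg_left p A B b, Finset.sum_mul]
  have hAB : entropy p (fun ω => (A ω, B ω))
      = -∑ a, ∑ b, probOf p (fun ω => (A ω, B ω)) (a, b) *
          Real.logb 2 (probOf p (fun ω => (A ω, B ω)) (a, b)) := by
    unfold entropy
    rw [Fintype.sum_prod_type]
  rw [mutualInfo, hA, hB, hAB]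
  simp only [mul_sub, Finset.sum_sub_distrib]
  ring

/-- Conditional mutual information in sum (log-ratio) form. -/
lemma CMI_eq (p : Ω → ℝ) (A : Ω → α) (B : Ω → β) (C : Ω → γ) :
    condMutualInfo p A B C = ∑ a, ∑ b, ∑ c,
      probOf p (fun ω => (A ω, B ω, C ω)) (a, b, c) *
      (Real.logb 2 (probOf p (fun ω => (A ω, B ω, C ω)) (a, b, c))
        + Real.logb 2 (probOf p C c)
        - Real.logb 2 (probOf p (fun ω => (A ω, C ω)) (a, c))
        - Real.logb 2 (probOf p (fun ω => (B ω, C ω)) (b, c))) := by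
  have hAC : entropy p (fun ω => (A ω, C ω))
      = -∑ a, ∑ b, ∑ c, probOf p (fun ω => (A ω, B ω, C ω)) (a, b, c) *
          Real.logb 2 (probOf p (fun ω => (A ω, C ω)) (a, c)) := by
    unfold entropy
    rw [Fintype.sum_prod_type]
    congr 1
    refine Finset.sum_congr rfl fun a _ => ?_
    rw [Finset.sum_comm]
    refine Finset.sum_congr rfl fun c _ => ?_
    rw [marg_mid p A B C a c, Finset.sum_mul]
  have hBC : entropy p (fun ω => (B ω, C ω))
      = -∑ a, ∑ b, ∑ c, probOf p (fun ω => (A ω, B ω, C ω)) (a, b, c) *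
          Real.logb 2 (probOf p (fun ω => (B ω, C ω)) (b, c)) := by
    unfold entropy
    rw [Fintype.sum_prod_type]
    rw [sum_rot (fun a b c => probOf p (fun ω => (A ω, B ω, C ω)) (a, b, c) *
          Real.logb 2 (probOf p (fun ω => (B ω, C ω)) (b, c)))]
    congr 1
    refine Finset.sum_congr rfl fun b _ => Finset.sum_congr rfl fun c _ => ?_
    rw [marg_left p A (fun ω => (B ω, C ω)) (b, c), Finset.sum_mul]
  have hABC : entropy p (fun ω => (A ω, B ω, C ω))
      = -∑ a, ∑ b, ∑ c, probOf p (fun ω => (A ω, B ω, C ω)) (a, b, c) *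
          Real.logb 2 (probOf p (fun ω => (A ω, B ω, C ω)) (a, b, c)) := by
    unfold entropy
    rw [Fintype.sum_prod_type]
    congr 1
    exact Finset.sum_congr rfl fun a _ => Fintype.sum_prod_type _
  have hC : entropy p C
      = -∑ a, ∑ b, ∑ c, probOf p (fun ω => (A ω, B ω, C ω)) (a, b, c) *
          Real.logb 2 (probOf p C c) := by
    unfold entropy
    rw [sum_rot2 (fun a b c => probOf p (fun ω => (A ω, B ω, C ω)) (a, b, c) *
          Real.logb 2 (probOf p C c))]
    congr 1
    refine Finset.sum_congr rfl fun c _ => ?_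
    rw [marg_left p B C c, Finset.sum_mul]
    refine Finset.sum_congr rfl fun b _ => ?_
    rw [marg_left p A (fun ω => (B ω, C ω)) (b, c), Finset.sum_mul]
  rw [condMutualInfo, hAC, hBC, hABC, hC]
  simp only [mul_add, mul_sub, Finset.sum_add_distrib, Finset.sum_sub_distrib]
  ring

/-- Gibbs' inequality, unnormalized form (natural log). -/
lemma gibbs {ι : Type} [Fintype ι] (p q : ι → ℝ)
    (hp : ∀ i, 0 ≤ p i) (hq : ∀ i, 0 ≤ q i)
    (hsum : ∑ i, q i ≤ ∑ i, p i) (hpq : ∀ i, 0 < p i → 0 < q i) :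
    0 ≤ ∑ i, p i * (Real.log (p i) - Real.log (q i)) := by
  have key : ∀ i ∈ (Finset.univ : Finset ι),
      p i * (Real.log (q i) - Real.log (p i)) ≤ q i - p i := by
    intro i _
    rcases eq_or_lt_of_le (hp i) with h0 | h0
    · rw [← h0]; simpa using hq i
    · have hqi := hpq i h0
      have hlog := Real.log_le_sub_one_of_pos (div_pos hqi h0)
      rw [Real.log_div (ne_of_gt hqi) (ne_of_gt h0)] at hlog
      have h2 := mul_le_mul_of_nonneg_left hlog (le_of_lt h0)
      calc p i * (Real.log (q i) - Real.log (p i)) ≤ p i * (q i / p i - 1) := h2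
        _ = q i - p i := by field_simp
  have h1 : ∑ i, p i * (Real.log (q i) - Real.log (p i)) ≤ 0 := by
    calc ∑ i, p i * (Real.log (q i) - Real.log (p i)) ≤ ∑ i, (q i - p i) :=
          Finset.sum_le_sum key
      _ = (∑ i, q i) - ∑ i, p i := Finset.sum_sub_distrib _ _
      _ ≤ 0 := by linarith
  have h2 : ∑ i, p i * (Real.log (p i) - Real.log (q i))
      = -∑ i, p i * (Real.log (q i) - Real.log (p i)) := by
    rw [← Finset.sum_neg_distrib]
    exact Finset.sum_congr rfl fun i _ => by ring
  rw [h2]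
  linarith

/-- Binary Pinsker inequality, normalized (natural log). -/
lemma pinsker01 (p q : ℝ) (hp0 : 0 ≤ p) (hp1 : p ≤ 1) (hq0 : 0 ≤ q) (hq1 : q ≤ 1)
    (hpq1 : 0 < p → 0 < q) (hpq2 : p < 1 → q < 1) :
    2 * (p - q)^2 ≤ p * (Real.log p - Real.log q)
      + (1 - p) * (Real.log (1 - p) - Real.log (1 - q)) := by
  rcases eq_or_lt_of_le hq0 with hq0' | hq0'
  · have hp' : p = 0 := by
      by_contra h
      have h1 : 0 < p := lt_of_le_of_ne hp0 (Ne.symm h)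
      have h2 := hpq1 h1
      rw [← hq0'] at h2
      exact lt_irrefl 0 h2
    rw [hp', ← hq0']; norm_num
  rcases eq_or_lt_of_le hq1 with hq1' | hq1'
  · have hp' : p = 1 := by
      by_contra h
      have h1 : p < 1 := lt_of_le_of_ne hp1 h
      have h2 := hpq2 h1
      rw [hq1'] at h2
      exact lt_irrefl 1 h2
    rw [hp', hq1']; norm_num
  -- main case : 0 < q < 1
  set F : ℝ → ℝ := fun t => p * (Real.log p - Real.log t)
      + (1 - p) * (Real.log (1 - p) - Real.log (1 - t)) - 2 * (p - t)^2 with hF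
  have hFp : F p = 0 := by simp [hF]
  set F' : ℝ → ℝ := fun t => p * (0 - t⁻¹) + (1 - p) * (0 - (1 - t)⁻¹ * (-1))
      - 2 * ((2:ℕ) * (p - t) ^ 1 * (-1)) with hF'
  have hder : ∀ t ∈ Set.Ioo (0:ℝ) 1, HasDerivAt F (F' t) t := by
    intro t ht
    have ht0 : t ≠ 0 := ne_of_gt ht.1
    have ht1 : (1:ℝ) - t ≠ 0 := by
      have := ht.2; intro h
      have : (1:ℝ) = t := by linarith [sub_eq_zero.mp h]
      linarith
    have h1 : HasDerivAt (fun s : ℝ => Real.log s) t⁻¹ t := Real.hasDerivAt_log ht0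
    have h2 : HasDerivAt (fun s : ℝ => 1 - s) (-1) t := (hasDerivAt_id t).const_sub 1
    have h3 : HasDerivAt (fun s : ℝ => Real.log (1 - s)) ((1 - t)⁻¹ * (-1)) t :=
      (Real.hasDerivAt_log ht1).comp t h2
    have h5 : HasDerivAt (fun s : ℝ => (p - s)) (-1) t := (hasDerivAt_id t).const_sub p
    have h6 : HasDerivAt (fun s : ℝ => (p - s)^2) ((2:ℕ) * (p - t)^1 * (-1)) t := h5.pow 2
    rw [hF, hF']
    exact ((((hasDerivAt_const t (Real.log p)).sub h1).const_mul p).add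
      (((hasDerivAt_const t (Real.log (1 - p))).sub h3).const_mul (1 - p))).sub
      (h6.const_mul 2)
  have hderiv_val : ∀ t ∈ Set.Ioo (0:ℝ) 1,
      F' t * (t * (1 - t)) = (t - p) * (2 * t - 1)^2 := by
    intro t ht
    have ht0 : t ≠ 0 := ne_of_gt ht.1
    have ht1 : (1:ℝ) - t ≠ 0 := by
      have := ht.2; intro h
      have : (1:ℝ) = t := by linarith [sub_eq_zero.mp h]
      linarith
    rw [hF']
    field_simp
    ring
  have hFq : 0 ≤ F q := by
    rcases le_or_gt p q with hle | hlt
    · have hmono : MonotoneOn F (Set.Ico p 1) := by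
        apply monotoneOn_of_hasDerivWithinAt_nonneg (convex_Ico p 1) (f' := F')
        · rw [hF]
          apply ContinuousOn.sub
          · apply ContinuousOn.add
            · rcases eq_or_lt_of_le hp0 with hp' | hp'
              · simp only [← hp', zero_mul]
                exact continuousOn_const
              · apply ContinuousOn.mul continuousOn_const
                apply ContinuousOn.sub continuousOn_const
                apply Real.continuousOn_log.mono
                intro t ht
                simp only [Set.mem_compl_iff, Set.mem_singleton_iff]
                intro h; rw [h] at ht; exact absurd ht.1 (by linarith)
            · apply ContinuousOn.mul continuousOn_const
              apply ContinuousOn.sub continuousOn_const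
              apply ContinuousOn.comp Real.continuousOn_log
                (continuousOn_const.sub continuousOn_id)
              intro t ht
              simp only [Set.mem_compl_iff, Set.mem_singleton_iff]
              intro h
              have h' : (1:ℝ) - t = 0 := h
              have := ht.2
              simp only [Set.mem_Ico] at ht
              linarith [ht.2]
          · exact continuousOn_const.mul ((continuousOn_const.sub continuousOn_id).pow 2)
        · intro t ht
          rw [interior_Ico] at ht
          exact (hder t ⟨lt_of_le_of_lt hp0 ht.1, ht.2⟩).hasDerivWithinAt
        · intro t ht
          rw [interior_Ico] at ht
          have ht' : t ∈ Set.Ioo (0:ℝ) 1 := ⟨lt_of_le_of_lt hp0 ht.1, ht.2⟩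
          have hpos : 0 < t * (1 - t) := mul_pos ht'.1 (by linarith [ht'.2])
          have hkey := hderiv_val t ht'
          nlinarith [mul_nonneg (sub_nonneg.mpr (le_of_lt ht.1)) (sq_nonneg (2*t - 1))]
      rcases eq_or_lt_of_le hle with heq | hlt'
      · rw [← heq, hFp]
      · have h1 : p ∈ Set.Ico p 1 := ⟨le_refl p, lt_trans hlt' hq1'⟩
        have h2 : q ∈ Set.Ico p 1 := ⟨hle, hq1'⟩
        have := hmono h1 h2 hle
        rw [hFp] at this
        exact this
    · have hanti : AntitoneOn F (Set.Ioc 0 p) := by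
        apply antitoneOn_of_hasDerivWithinAt_nonpos (convex_Ioc 0 p) (f' := F')
        · rw [hF]
          apply ContinuousOn.sub
          · apply ContinuousOn.add
            · apply ContinuousOn.mul continuousOn_const
              apply ContinuousOn.sub continuousOn_const
              apply Real.continuousOn_log.mono
              intro t ht
              simp only [Set.mem_compl_iff, Set.mem_singleton_iff]
              intro h
              simp only [Set.mem_Ioc] at ht
              rw [h] at ht
              exact absurd ht.1 (by linarith)
            · rcases eq_or_lt_of_le hp1 with hp' | hp'
              · simp only [hp', sub_self, zero_mul]
                exact continuousOn_const
              · apply ContinuousOn.mul continuousOn_const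
                apply ContinuousOn.sub continuousOn_const
                apply ContinuousOn.comp Real.continuousOn_log
                  (continuousOn_const.sub continuousOn_id)
                intro t ht
                simp only [Set.mem_compl_iff, Set.mem_singleton_iff]
                intro h
                have h' : (1:ℝ) - t = 0 := h
                simp only [Set.mem_Ioc] at ht
                linarith [ht.2]
          · exact continuousOn_const.mul ((continuousOn_const.sub continuousOn_id).pow 2)
        · intro t ht
          rw [interior_Ioc] at ht
          exact (hder t ⟨ht.1, lt_of_lt_of_le ht.2 hp1⟩).hasDerivWithinAt
        · intro t ht
          rw [interior_Ioc] at ht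
          have ht' : t ∈ Set.Ioo (0:ℝ) 1 := ⟨ht.1, lt_of_lt_of_le ht.2 hp1⟩
          have hpos : 0 < t * (1 - t) := mul_pos ht'.1 (by linarith [ht'.2])
          have hkey := hderiv_val t ht'
          nlinarith [mul_nonneg (sub_nonneg.mpr (le_of_lt ht.2)) (sq_nonneg (2*t - 1))]
      have hpp : 0 < p := lt_of_le_of_lt hq0 hlt
      have h1 : q ∈ Set.Ioc (0:ℝ) p := ⟨hq0', le_of_lt hlt⟩
      have h2 : p ∈ Set.Ioc (0:ℝ) p := ⟨hpp, le_refl p⟩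
      have := hanti h1 h2 (le_of_lt hlt)
      rw [hFp] at this
      exact this
  rw [hF] at hFq
  simp only at hFq
  linarith

/-- Binary Pinsker inequality at scale `m` (natural log). -/
lemma pinskerM (m a b : ℝ) (hm : 0 < m) (ha0 : 0 ≤ a) (ham : a ≤ m)
    (hb0 : 0 ≤ b) (hbm : b ≤ m)
    (h1 : 0 < a → 0 < b) (h2 : a < m → b < m) :
    2 * (a - b)^2 / m ≤ a * (Real.log a - Real.log b)
      + (m - a) * (Real.log (m - a) - Real.log (m - b)) := by
  have hm' : m ≠ 0 := ne_of_gt hm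
  have hposa : ∀ x : ℝ, 0 < x / m → 0 < x := fun x hx => by
    have h := mul_pos hx hm
    rwa [div_mul_cancel₀ x hm'] at h
  have base := pinsker01 (a/m) (b/m) (div_nonneg ha0 hm.le) ((div_le_one hm).mpr ham)
    (div_nonneg hb0 hm.le) ((div_le_one hm).mpr hbm)
    (fun h => div_pos (h1 (hposa a h)) hm)
    (fun h => (div_lt_one hm).mpr (h2 ((div_lt_one hm).mp h)))
  have idA : a * (Real.log a - Real.log b)
      = m * ((a/m) * (Real.log (a/m) - Real.log (b/m))) := by
    rcases eq_or_lt_of_le ha0 with h | h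
    · rw [← h]; simp
    · have hb : 0 < b := h1 h
      rw [Real.log_div (ne_of_gt h) hm', Real.log_div (ne_of_gt hb) hm']
      field_simp
      ring
  have idB : (m - a) * (Real.log (m - a) - Real.log (m - b))
      = m * ((1 - a/m) * (Real.log (1 - a/m) - Real.log (1 - b/m))) := by
    have e1 : 1 - a/m = (m - a)/m := by field_simp
    have e2 : 1 - b/m = (m - b)/m := by field_simp
    rw [e1, e2]
    rcases eq_or_lt_of_le ham with h | h
    · rw [h]; simp
    · have hma : 0 < m - a := by linarith
      have hmb : 0 < m - b := by linarith [h2 h]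
      rw [Real.log_div (ne_of_gt hma) hm', Real.log_div (ne_of_gt hmb) hm']
      field_simp
      ring
  have idL : 2 * (a - b)^2 / m = m * (2 * (a/m - b/m)^2) := by
    field_simp
  rw [idL, idA, idB, ← mul_add]
  exact mul_le_mul_of_nonneg_left base hm.le

end ESK

namespace ESK

section Core

open Real Finset

variable {U V : Type} [Fintype U] [Fintype V]

/-- Mass of `(u,v)`. -/
def mUV (P : Bool × Bool × U × V → ℝ) (u : U) (v : V) : ℝ := ∑ x, ∑ y, P (x, y, u, v)

/-- Mass of `(x,u,v)`. -/
def aX (P : Bool × Bool × U × V → ℝ) (x : Bool) (u : U) (v : V) : ℝ := ∑ y, P (x, y, u, v)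

/-- Mass of `(y,u,v)`. -/
def bY (P : Bool × Bool × U × V → ℝ) (y : Bool) (u : U) (v : V) : ℝ := ∑ x, P (x, y, u, v)

/-- Mass of `(x,y,u)`. -/
def tXY (P : Bool × Bool × U × V → ℝ) (x y : Bool) (u : U) : ℝ := ∑ v, P (x, y, u, v)

/-- Mass of `u`. -/
def mU (P : Bool × Bool × U × V → ℝ) (u : U) : ℝ := ∑ v, mUV P u v

/-- Mass of `(y,u)`. -/
def bU (P : Bool × Bool × U × V → ℝ) (y : Bool) (u : U) : ℝ := ∑ v, bY P y u v

variable (P : Bool × Bool × U × V → ℝ)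

lemma sum4 (f : Bool × Bool × U × V → ℝ) :
    ∑ q, f q = ∑ x, ∑ y, ∑ u, ∑ v, f (x, y, u, v) := by
  simp only [Fintype.sum_prod_type]

lemma sum_ite_fst {A B : Type} [Fintype A] [Fintype B] (g : A → B → ℝ) (a : A) :
    (∑ a', ∑ b', if a' = a then g a' b' else 0) = ∑ b', g a b' := by
  rw [Finset.sum_comm]; simp

lemma sum_rot4 {α β γ δ : Type} [Fintype α] [Fintype β] [Fintype γ] [Fintype δ]
    (f : α → β → γ → δ → ℝ) :
    ∑ a, ∑ b, ∑ c, ∑ d, f a b c d = ∑ b, ∑ c, ∑ d, ∑ a, f a b c d := by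
  rw [Finset.sum_comm]
  exact Finset.sum_congr rfl fun b _ => sum_rot (fun a c d => f a b c d)

lemma sum4_comm {α β γ δ : Type} [Fintype α] [Fintype β] [Fintype γ] [Fintype δ]
    (f : α → β → γ → δ → ℝ) :
    ∑ a, ∑ b, ∑ c, ∑ d, f a b c d = ∑ c, ∑ d, ∑ a, ∑ b, f a b c d := by
  rw [show (∑ a, ∑ b, ∑ c, ∑ d, f a b c d) = ∑ a, ∑ c, ∑ d, ∑ b, f a b c d from
    Finset.sum_congr rfl fun a _ => sum_rot (fun b c d => f a b c d)]
  exact sum_rot (fun a c d => ∑ b, f a b c d)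

/-! probOf computations for the four-fold product space -/

lemma prUV (u : U) (v : V) : probOf P (fun q => q.2.2) (u, v) = mUV P u v := by
  simp [probOf, mUV, Fintype.sum_prod_type, Prod.ext_iff, ite_and, sum_ite_fst]

lemma prXUV (x : Bool) (u : U) (v : V) :
    probOf P (fun q => (q.1, q.2.2)) (x, (u, v)) = aX P x u v := by
  simp [probOf, aX, Fintype.sum_prod_type, Prod.ext_iff, ite_and, sum_ite_fst]

lemma prYUV (y : Bool) (u : U) (v : V) :
    probOf P (fun q => (q.2.1, q.2.2)) (y, (u, v)) = bY P y u v := by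
  simp [probOf, bY, Fintype.sum_prod_type, Prod.ext_iff, ite_and, sum_ite_fst]

lemma prX (x : Bool) : probOf P (fun q => q.1) x = ∑ y, ∑ u, ∑ v, P (x, y, u, v) := by
  cases x <;>
    simp [probOf, Fintype.sum_prod_type, Prod.ext_iff, ite_and, sum_ite_fst]

lemma prId (x y : Bool) (u : U) (v : V) :
    probOf P (fun q => (q.1, q.2.1, q.2.2)) (x, y, (u, v)) = P (x, y, u, v) := by
  simp [probOf, Fintype.sum_prod_type, Prod.ext_iff, ite_and, sum_ite_fst]

lemma prT (x y : Bool) (u : U) (v : V) :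
    probOf P (fun q => ((q.1, q.2.1), q.2.2.2, q.2.2.1)) ((x, y), v, u) = P (x, y, u, v) := by
  simp [probOf, Fintype.sum_prod_type, Prod.ext_iff, ite_and, sum_ite_fst]

lemma prU (u : U) : probOf P (fun q => q.2.2.1) u = mU P u := by
  rw [show mU P u = ∑ x, ∑ y, ∑ v, P (x, y, u, v) from ?_]
  · simp [probOf, Fintype.sum_prod_type, Prod.ext_iff, ite_and, sum_ite_fst]
  · simp only [mU, mUV]
    rw [Finset.sum_comm]
    exact Finset.sum_congr rfl fun x _ => Finset.sum_comm

lemma prXYU (x y : Bool) (u : U) :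
    probOf P (fun q => ((q.1, q.2.1), q.2.2.1)) ((x, y), u) = tXY P x y u := by
  simp [probOf, tXY, Fintype.sum_prod_type, Prod.ext_iff, ite_and, sum_ite_fst]

lemma prVU (v : V) (u : U) :
    probOf P (fun q => (q.2.2.2, q.2.2.1)) (v, u) = mUV P u v := by
  simp [probOf, mUV, Fintype.sum_prod_type, Prod.ext_iff, ite_and, sum_ite_fst]

lemma prYU (y : Bool) (u : U) :
    probOf P (fun q => (q.2.1, q.2.2.1)) (y, u) = bU P y u := by
  rw [show bU P y u = ∑ x, ∑ v, P (x, y, u, v) from ?_]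
  · simp [probOf, Fintype.sum_prod_type, Prod.ext_iff, ite_and, sum_ite_fst]
  · simp only [bU, bY]
    exact Finset.sum_comm

/-! mass decompositions -/

lemma mUV_aX (u : U) (v : V) : mUV P u v = aX P true u v + aX P false u v := by
  simp [mUV, aX, Fintype.sum_bool]

lemma mUV_bY (u : U) (v : V) : mUV P u v = bY P true u v + bY P false u v := by
  simp only [mUV, bY]
  rw [Finset.sum_comm]
  simp [Fintype.sum_bool]

lemma mU_bU (u : U) : mU P u = bU P true u + bU P false u := by
  simp only [mU, bU, ← Finset.sum_add_distrib]
  exact Finset.sum_congr rfl fun v _ => mUV_bY P u v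

variable (hP0 : ∀ q, 0 ≤ P q)

include hP0

lemma aX_nonneg (x : Bool) (u : U) (v : V) : 0 ≤ aX P x u v :=
  Finset.sum_nonneg fun _ _ => hP0 _

lemma bY_nonneg (y : Bool) (u : U) (v : V) : 0 ≤ bY P y u v :=
  Finset.sum_nonneg fun _ _ => hP0 _

lemma tXY_nonneg (x y : Bool) (u : U) : 0 ≤ tXY P x y u :=
  Finset.sum_nonneg fun _ _ => hP0 _

lemma mUV_nonneg (u : U) (v : V) : 0 ≤ mUV P u v :=
  Finset.sum_nonneg fun _ _ => Finset.sum_nonneg fun _ _ => hP0 _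

lemma mU_nonneg (u : U) : 0 ≤ mU P u :=
  Finset.sum_nonneg fun _ _ => mUV_nonneg P hP0 _ _

lemma bU_nonneg (y : Bool) (u : U) : 0 ≤ bU P y u :=
  Finset.sum_nonneg fun _ _ => bY_nonneg P hP0 _ _ _

lemma aX_le (x : Bool) (u : U) (v : V) : aX P x u v ≤ mUV P u v := by
  rcases x
  · rw [mUV_aX]; have := aX_nonneg P hP0 true u v; linarith
  · rw [mUV_aX]; have := aX_nonneg P hP0 false u v; linarith

lemma bY_le (y : Bool) (u : U) (v : V) : bY P y u v ≤ mUV P u v := by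
  rcases y
  · rw [mUV_bY]; have := bY_nonneg P hP0 true u v; linarith
  · rw [mUV_bY]; have := bY_nonneg P hP0 false u v; linarith

lemma bU_le (y : Bool) (u : U) : bU P y u ≤ mU P u := by
  rcases y
  · rw [mU_bU]; have := bU_nonneg P hP0 true u; linarith
  · rw [mU_bU]; have := bU_nonneg P hP0 false u; linarith

lemma mUV_le_mU (u : U) (v : V) : mUV P u v ≤ mU P u :=
  Finset.single_le_sum (f := fun v => mUV P u v) (fun _ _ => mUV_nonneg P hP0 _ _)
    (Finset.mem_univ v)

lemma bY_le_bU (y : Bool) (u : U) (v : V) : bY P y u v ≤ bU P y u :=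
  Finset.single_le_sum (f := fun v => bY P y u v) (fun _ _ => bY_nonneg P hP0 _ _ _)
    (Finset.mem_univ v)

lemma P_le_aX (x y : Bool) (u : U) (v : V) : P (x, y, u, v) ≤ aX P x u v :=
  Finset.single_le_sum (f := fun y => P (x, y, u, v)) (fun _ _ => hP0 _)
    (Finset.mem_univ y)

lemma P_le_bY (x y : Bool) (u : U) (v : V) : P (x, y, u, v) ≤ bY P y u v :=
  Finset.single_le_sum (f := fun x => P (x, y, u, v)) (fun _ _ => hP0 _)
    (Finset.mem_univ x)

lemma P_le_tXY (x y : Bool) (u : U) (v : V) : P (x, y, u, v) ≤ tXY P x y u :=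
  Finset.single_le_sum (f := fun v => P (x, y, u, v)) (fun _ _ => hP0 _)
    (Finset.mem_univ v)

lemma aX_eq_zero {u : U} {v : V} (hm : mUV P u v = 0) (x : Bool) : aX P x u v = 0 := by
  have h1 := aX_nonneg P hP0 x u v
  have h2 := aX_le P hP0 x u v
  linarith [hm ▸ h2]

lemma bY_eq_zero {u : U} {v : V} (hm : mUV P u v = 0) (y : Bool) : bY P y u v = 0 := by
  have h1 := bY_nonneg P hP0 y u v
  have h2 := bY_le P hP0 y u v
  linarith [hm ▸ h2]

end Core

end ESK

namespace ESK

section Bounds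

open Real Finset

variable {U V : Type} [Fintype U] [Fintype V]

lemma sum_reorder_xyuv (g : Bool → Bool → U → V → ℝ) :
    ∑ x, ∑ y, ∑ u, ∑ v, g x y u v = ∑ y, ∑ u, ∑ x, ∑ v, g x y u v := by
  rw [sum_rot4]
  exact Finset.sum_congr rfl fun y _ => Finset.sum_congr rfl fun u _ => Finset.sum_comm

/-- Pointwise Pinsker bound for the `X` constraint. -/
lemma ptw1 (m a : ℝ) (hm : 0 < m) (ha0 : 0 ≤ a) (ham : a ≤ m) :
    (2 / Real.log 2) * ((a - m/2)^2 / m)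
      ≤ a * (Real.logb 2 a - Real.logb 2 (1/2) - Real.logb 2 m)
        + (m - a) * (Real.logb 2 (m - a) - Real.logb 2 (1/2) - Real.logb 2 m) := by
  have hL2 : 0 < Real.log 2 := Real.log_pos (by norm_num)
  have hL2' : Real.log 2 ≠ 0 := ne_of_gt hL2
  have hkey := pinskerM m a (m/2) hm ha0 ham (by linarith) (by linarith)
    (fun _ => by linarith) (fun _ => by linarith)
  have hlm : Real.log (m/2) = Real.log m - Real.log 2 :=
    Real.log_div (ne_of_gt hm) two_ne_zero
  rw [show m - m/2 = m/2 from by ring, hlm] at hkey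
  have h12 : Real.logb 2 (1/2 : ℝ) = -1 := by
    rw [show (1/2:ℝ) = 2⁻¹ by norm_num, Real.logb_inv, Real.logb_self_eq_one (by norm_num)]
  rw [h12]
  simp only [Real.logb]
  calc (2/Real.log 2) * ((a - m/2)^2/m) = (Real.log 2)⁻¹ * (2*(a - m/2)^2/m) := by ring
    _ ≤ (Real.log 2)⁻¹ * (a*(Real.log a - (Real.log m - Real.log 2))
          + (m-a)*(Real.log (m-a) - (Real.log m - Real.log 2))) :=
        mul_le_mul_of_nonneg_left hkey (inv_nonneg.mpr hL2.le)
    _ = a * (Real.log a / Real.log 2 - (-1) - Real.log m / Real.log 2)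
        + (m - a) * (Real.log (m-a) / Real.log 2 - (-1) - Real.log m / Real.log 2) := by
        field_simp
        ring
  
/-- Pointwise Pinsker bound for the `Y|U` constraint. -/
lemma ptw2 (m a c M : ℝ) (hm : 0 < m) (hmM : m ≤ M) (ha0 : 0 ≤ a) (ham : a ≤ m)
    (hc0 : 0 ≤ c) (hcM : c ≤ M) (hac : a ≤ c) (hac2 : m - a ≤ M - c) :
    (2 / Real.log 2) * ((a - c * m / M)^2 / m)
      ≤ a * (Real.logb 2 a + Real.logb 2 M - Real.logb 2 c - Real.logb 2 m)
        + (m - a) * (Real.logb 2 (m - a) + Real.logb 2 M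
            - Real.logb 2 (M - c) - Real.logb 2 m) := by
  have hL2 : 0 < Real.log 2 := Real.log_pos (by norm_num)
  have hM : 0 < M := lt_of_lt_of_le hm hmM
  have hMne := ne_of_gt hM
  have hmne := ne_of_gt hm
  have hb0 : 0 ≤ c * m / M := div_nonneg (mul_nonneg hc0 hm.le) hM.le
  have hbm : c * m / M ≤ m := by
    rw [div_le_iff₀ hM]
    nlinarith
  have hprov1 : 0 < a → 0 < c * m / M := fun h =>
    div_pos (mul_pos (lt_of_lt_of_le h hac) hm) hM
  have hprov2 : a < m → c * m / M < m := by
    intro h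
    have hcM' : c < M := by nlinarith
    rw [div_lt_iff₀ hM]
    nlinarith
  have hkey := pinskerM m a (c * m / M) hm ha0 ham hb0 hbm hprov1 hprov2
  have econv1 : a * (Real.logb 2 a + Real.logb 2 M - Real.logb 2 c - Real.logb 2 m)
      = (Real.log 2)⁻¹ * (a * (Real.log a - Real.log (c * m / M))) := by
    rcases eq_or_lt_of_le ha0 with h | h
    · rw [← h]; ring
    · have hcpos : 0 < c := lt_of_lt_of_le h hac
      rw [Real.log_div (ne_of_gt (mul_pos hcpos hm)) hMne,
        Real.log_mul (ne_of_gt hcpos) hmne]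
      simp only [Real.logb]
      ring
  have econv2 : (m - a) * (Real.logb 2 (m - a) + Real.logb 2 M
        - Real.logb 2 (M - c) - Real.logb 2 m)
      = (Real.log 2)⁻¹ * ((m - a) * (Real.log (m - a) - Real.log (m - c * m / M))) := by
    rcases eq_or_lt_of_le ham with h | h
    · rw [h, sub_self]; ring
    · have hMc : 0 < M - c := lt_of_lt_of_le (by linarith) hac2
      have hmb : m - c * m / M = (M - c) * m / M := by field_simp
      rw [hmb, Real.log_div (ne_of_gt (mul_pos hMc hm)) hMne,
        Real.log_mul (ne_of_gt hMc) hmne]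
      simp only [Real.logb]
      ring
  rw [econv1, econv2, ← mul_add]
  calc (2/Real.log 2) * ((a - c * m / M)^2/m)
      = (Real.log 2)⁻¹ * (2*(a - c * m / M)^2/m) := by ring
    _ ≤ (Real.log 2)⁻¹ * (a * (Real.log a - Real.log (c * m / M))
          + (m - a) * (Real.log (m - a) - Real.log (m - c * m / M))) :=
        mul_le_mul_of_nonneg_left hkey (inv_nonneg.mpr hL2.le)

variable (P : Bool × Bool × U × V → ℝ)

/-- `I(X;UV)` in sum form. -/
lemma MI_form (hXhalf : ∀ x, ∑ y, ∑ u, ∑ v, P (x, y, u, v) = 1/2) :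
    mutualInfo P (fun q => q.1) (fun q => q.2.2)
      = ∑ u, ∑ v, ∑ x, aX P x u v *
          (Real.logb 2 (aX P x u v) - Real.logb 2 (1/2) - Real.logb 2 (mUV P u v)) := by
  rw [MI_eq]
  rw [Finset.sum_comm]
  rw [Fintype.sum_prod_type]
  refine Finset.sum_congr rfl fun u _ => Finset.sum_congr rfl fun v _ =>
    Finset.sum_congr rfl fun x _ => ?_
  simp only [prXUV, prUV]
  rw [show probOf P (fun q => q.1) x = 1/2 from by rw [prX, hXhalf]]

/-- First Pinsker consequence: the `X`-bias is small. -/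
lemma C1_bound (hP0 : ∀ q, 0 ≤ P q)
    (hXhalf : ∀ x, ∑ y, ∑ u, ∑ v, P (x, y, u, v) = 1/2)
    (hI1 : mutualInfo P (fun q => q.1) (fun q => q.2.2) ≤ 1/4) :
    ∑ u, ∑ v, (aX P true u v - mUV P u v / 2)^2 / mUV P u v ≤ Real.log 2 / 8 := by
  have hL2 : 0 < Real.log 2 := Real.log_pos (by norm_num)
  have hptw : ∀ u v, (2 / Real.log 2) * ((aX P true u v - mUV P u v / 2)^2 / mUV P u v)
      ≤ ∑ x, aX P x u v *
          (Real.logb 2 (aX P x u v) - Real.logb 2 (1/2) - Real.logb 2 (mUV P u v)) := by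
    intro u v
    rcases eq_or_lt_of_le (mUV_nonneg P hP0 u v) with hm | hm
    · have ha : ∀ x, aX P x u v = 0 := aX_eq_zero P hP0 hm.symm
      rw [← hm]
      simp [ha]
    · have hfa : aX P false u v = mUV P u v - aX P true u v := by
        have := mUV_aX P u v; linarith
      rw [Fintype.sum_bool, hfa]
      exact ptw1 (mUV P u v) (aX P true u v) hm (aX_nonneg P hP0 true u v)
        (aX_le P hP0 true u v)
  have hs : ∑ u, ∑ v, (2 / Real.log 2) * ((aX P true u v - mUV P u v / 2)^2 / mUV P u v)
      ≤ ∑ u, ∑ v, ∑ x, aX P x u v *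
          (Real.logb 2 (aX P x u v) - Real.logb 2 (1/2) - Real.logb 2 (mUV P u v)) :=
    Finset.sum_le_sum fun u _ => Finset.sum_le_sum fun v _ => hptw u v
  rw [MI_form P hXhalf] at hI1
  have hfac : ∑ u, ∑ v, (2 / Real.log 2) * ((aX P true u v - mUV P u v / 2)^2 / mUV P u v)
      = (2 / Real.log 2) *
        ∑ u, ∑ v, (aX P true u v - mUV P u v / 2)^2 / mUV P u v := by
    rw [Finset.mul_sum]
    exact Finset.sum_congr rfl fun u _ => by rw [Finset.mul_sum]
  rw [hfac] at hs
  have hQle := le_trans hs hI1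
  rw [div_mul_eq_mul_div, div_le_iff₀ hL2] at hQle
  linarith

/-- `I(XY;V|U)` in sum form. -/
lemma CMI_form :
    condMutualInfo P (fun q => (q.1, q.2.1)) (fun q => q.2.2.2) (fun q => q.2.2.1)
      = ∑ x, ∑ y, ∑ u, ∑ v, P (x, y, u, v) *
          (Real.logb 2 (P (x, y, u, v)) + Real.logb 2 (mU P u)
            - Real.logb 2 (tXY P x y u) - Real.logb 2 (mUV P u v)) := by
  rw [CMI_eq]
  rw [Fintype.sum_prod_type]
  refine Finset.sum_congr rfl fun x _ => Finset.sum_congr rfl fun y _ => ?_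
  rw [Finset.sum_comm]
  refine Finset.sum_congr rfl fun u _ => Finset.sum_congr rfl fun v _ => ?_
  simp only [prT, prU, prXYU, prVU]

/-- Gibbs step : marginalizing `X` out of the secrecy constraint. -/
lemma S_ge_S' (hP0 : ∀ q, 0 ≤ P q) :
    ∑ y, ∑ u, ∑ v, bY P y u v * (Real.logb 2 (bY P y u v) + Real.logb 2 (mU P u)
        - Real.logb 2 (bU P y u) - Real.logb 2 (mUV P u v))
    ≤ ∑ x, ∑ y, ∑ u, ∑ v, P (x, y, u, v) * (Real.logb 2 (P (x, y, u, v))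
        + Real.logb 2 (mU P u) - Real.logb 2 (tXY P x y u)
        - Real.logb 2 (mUV P u v)) := by
  have hL2 : 0 < Real.log 2 := Real.log_pos (by norm_num)
  have hdiff : ∀ y u, 0 ≤ ∑ x, ∑ v, P (x, y, u, v) *
      (Real.logb 2 (P (x, y, u, v)) + Real.logb 2 (bU P y u)
        - Real.logb 2 (tXY P x y u) - Real.logb 2 (bY P y u v)) := by
    intro y u
    have hg : 0 ≤ ∑ i : Bool × V, P (i.1, y, u, i.2) *
        (Real.log (P (i.1, y, u, i.2))
          - Real.log (tXY P i.1 y u * bY P y u i.2 / bU P y u)) := by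
      apply gibbs
      · intro i; exact hP0 _
      · intro i
        exact div_nonneg (mul_nonneg (tXY_nonneg P hP0 _ _ _) (bY_nonneg P hP0 _ _ _))
          (bU_nonneg P hP0 _ _)
      · have hsp : ∑ i : Bool × V, P (i.1, y, u, i.2) = bU P y u := by
          rw [Fintype.sum_prod_type]
          rw [show bU P y u = ∑ v, ∑ x, P (x, y, u, v) from rfl]
          exact Finset.sum_comm
        have hsq : ∑ i : Bool × V, tXY P i.1 y u * bY P y u i.2 / bU P y u
            = bU P y u := by
          rw [Fintype.sum_prod_type]
          rcases eq_or_lt_of_le (bU_nonneg P hP0 y u) with h0 | h0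
          · have hb0 : ∀ v, bY P y u v = 0 := by
              intro v
              have h1 := bY_nonneg P hP0 y u v
              have h2 := bY_le_bU P hP0 y u v
              rw [← h0] at h2
              linarith
            simp [hb0, ← h0]
          · have hbne : bU P y u ≠ 0 := ne_of_gt h0
            calc ∑ x, ∑ v, tXY P x y u * bY P y u v / bU P y u
                = ∑ x, tXY P x y u * bU P y u / bU P y u := by
                  refine Finset.sum_congr rfl fun x _ => ?_
                  rw [← Finset.sum_div, ← Finset.mul_sum]
                  rw [show (∑ v, bY P y u v) = bU P y u from rfl]
              _ = ∑ x, tXY P x y u := by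
                  refine Finset.sum_congr rfl fun x _ => ?_
                  rw [mul_div_assoc, div_self hbne, mul_one]
              _ = bU P y u := by
                  rw [show (∑ x, tXY P x y u) = ∑ x, ∑ v, P (x, y, u, v) from rfl]
                  rw [Finset.sum_comm]
                  rfl
        rw [hsp, hsq]
      · intro i hi
        have h1 : 0 < tXY P i.1 y u := lt_of_lt_of_le hi (P_le_tXY P hP0 _ _ _ _)
        have h2 : 0 < bY P y u i.2 := lt_of_lt_of_le hi (P_le_bY P hP0 _ _ _ _)
        have h3 : 0 < bU P y u := lt_of_lt_of_le h2 (bY_le_bU P hP0 _ _ _)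
        exact div_pos (mul_pos h1 h2) h3
    have hconv : ∑ x, ∑ v, P (x, y, u, v) *
        (Real.logb 2 (P (x, y, u, v)) + Real.logb 2 (bU P y u)
          - Real.logb 2 (tXY P x y u) - Real.logb 2 (bY P y u v))
        = (Real.log 2)⁻¹ * ∑ i : Bool × V, P (i.1, y, u, i.2) *
          (Real.log (P (i.1, y, u, i.2))
            - Real.log (tXY P i.1 y u * bY P y u i.2 / bU P y u)) := by
      rw [Fintype.sum_prod_type, Finset.mul_sum]
      refine Finset.sum_congr rfl fun x _ => ?_
      rw [Finset.mul_sum]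
      refine Finset.sum_congr rfl fun v _ => ?_
      rcases eq_or_lt_of_le (hP0 (x, y, u, v)) with hz | hz
      · rw [← hz]; ring
      · have h1 : 0 < tXY P x y u := lt_of_lt_of_le hz (P_le_tXY P hP0 _ _ _ _)
        have h2 : 0 < bY P y u v := lt_of_lt_of_le hz (P_le_bY P hP0 _ _ _ _)
        have h3 : 0 < bU P y u := lt_of_lt_of_le h2 (bY_le_bU P hP0 _ _ _)
        rw [Real.log_div (ne_of_gt (mul_pos h1 h2)) (ne_of_gt h3),
          Real.log_mul (ne_of_gt h1) (ne_of_gt h2)]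
        simp only [Real.logb]
        ring
    rw [hconv]
    exact mul_nonneg (inv_nonneg.mpr hL2.le) hg
  -- assemble
  have hLHS : ∑ y, ∑ u, ∑ v, bY P y u v * (Real.logb 2 (bY P y u v)
        + Real.logb 2 (mU P u) - Real.logb 2 (bU P y u) - Real.logb 2 (mUV P u v))
      = ∑ x, ∑ y, ∑ u, ∑ v, P (x, y, u, v) * (Real.logb 2 (bY P y u v)
        + Real.logb 2 (mU P u) - Real.logb 2 (bU P y u) - Real.logb 2 (mUV P u v)) := by
    rw [sum_rot4]
    refine Finset.sum_congr rfl fun y _ => Finset.sum_congr rfl fun u _ =>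
      Finset.sum_congr rfl fun v _ => ?_
    rw [show bY P y u v = ∑ x, P (x, y, u, v) from rfl, Finset.sum_mul]
  rw [hLHS, ← sub_nonneg]
  simp only [← Finset.sum_sub_distrib]
  rw [show (∑ x, ∑ y, ∑ u, ∑ v, (P (x, y, u, v) * (Real.logb 2 (P (x, y, u, v))
        + Real.logb 2 (mU P u) - Real.logb 2 (tXY P x y u) - Real.logb 2 (mUV P u v))
      - P (x, y, u, v) * (Real.logb 2 (bY P y u v) + Real.logb 2 (mU P u)
        - Real.logb 2 (bU P y u) - Real.logb 2 (mUV P u v))))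
      = ∑ y, ∑ u, ∑ x, ∑ v, P (x, y, u, v) *
          (Real.logb 2 (P (x, y, u, v)) + Real.logb 2 (bU P y u)
            - Real.logb 2 (tXY P x y u) - Real.logb 2 (bY P y u v)) from ?_]
  · exact Finset.sum_nonneg fun y _ => Finset.sum_nonneg fun u _ => hdiff y u
  · rw [show (∑ x, ∑ y, ∑ u, ∑ v, (P (x, y, u, v) * (Real.logb 2 (P (x, y, u, v))
        + Real.logb 2 (mU P u) - Real.logb 2 (tXY P x y u) - Real.logb 2 (mUV P u v))
      - P (x, y, u, v) * (Real.logb 2 (bY P y u v) + Real.logb 2 (mU P u)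
        - Real.logb 2 (bU P y u) - Real.logb 2 (mUV P u v))))
      = ∑ x, ∑ y, ∑ u, ∑ v, P (x, y, u, v) *
          (Real.logb 2 (P (x, y, u, v)) + Real.logb 2 (bU P y u)
            - Real.logb 2 (tXY P x y u) - Real.logb 2 (bY P y u v)) from
      Finset.sum_congr rfl fun x _ => Finset.sum_congr rfl fun y _ =>
        Finset.sum_congr rfl fun u _ => Finset.sum_congr rfl fun v _ => by ring]
    exact sum_reorder_xyuv _

/-- Second Pinsker consequence: the hidden `Y`-bias is small. -/
lemma C2_bound (hP0 : ∀ q, 0 ≤ P q)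
    (hI2 : condMutualInfo P (fun q => (q.1, q.2.1)) (fun q => q.2.2.2)
        (fun q => q.2.2.1) ≤ 1/4) :
    ∑ u, ∑ v, (bY P true u v - bU P true u * mUV P u v / mU P u)^2 / mUV P u v
      ≤ Real.log 2 / 8 := by
  have hL2 : 0 < Real.log 2 := Real.log_pos (by norm_num)
  have hS' : ∑ y, ∑ u, ∑ v, bY P y u v * (Real.logb 2 (bY P y u v)
        + Real.logb 2 (mU P u) - Real.logb 2 (bU P y u) - Real.logb 2 (mUV P u v))
      ≤ 1/4 := by
    refine le_trans (S_ge_S' P hP0) ?_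
    rw [← CMI_form]
    exact hI2
  rw [sum_rot (fun y u v => bY P y u v * (Real.logb 2 (bY P y u v)
        + Real.logb 2 (mU P u) - Real.logb 2 (bU P y u)
        - Real.logb 2 (mUV P u v)))] at hS'
  have hptw : ∀ u v, (2 / Real.log 2) *
      ((bY P true u v - bU P true u * mUV P u v / mU P u)^2 / mUV P u v)
      ≤ ∑ y, bY P y u v * (Real.logb 2 (bY P y u v) + Real.logb 2 (mU P u)
          - Real.logb 2 (bU P y u) - Real.logb 2 (mUV P u v)) := by
    intro u v
    rcases eq_or_lt_of_le (mUV_nonneg P hP0 u v) with hm | hm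
    · have hb : ∀ y, bY P y u v = 0 := bY_eq_zero P hP0 hm.symm
      rw [← hm]
      simp [hb]
    · have hfb : bY P false u v = mUV P u v - bY P true u v := by
        have := mUV_bY P u v; linarith
      have hfbU : bU P false u = mU P u - bU P true u := by
        have := mU_bU P u; linarith
      rw [Fintype.sum_bool, hfb, hfbU]
      exact ptw2 (mUV P u v) (bY P true u v) (bU P true u) (mU P u) hm
        (mUV_le_mU P hP0 u v) (bY_nonneg P hP0 true u v) (bY_le P hP0 true u v)
        (bU_nonneg P hP0 true u) (bU_le P hP0 true u)
        (bY_le_bU P hP0 true u v)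
        (by
          have h1 := bY_le_bU P hP0 false u v
          have h2 := hfb
          have h3 := hfbU
          linarith)
  have hs : ∑ u, ∑ v, (2 / Real.log 2) *
      ((bY P true u v - bU P true u * mUV P u v / mU P u)^2 / mUV P u v)
      ≤ ∑ u, ∑ v, ∑ y, bY P y u v * (Real.logb 2 (bY P y u v) + Real.logb 2 (mU P u)
          - Real.logb 2 (bU P y u) - Real.logb 2 (mUV P u v)) :=
    Finset.sum_le_sum fun u _ => Finset.sum_le_sum fun v _ => hptw u v
  have hfac : ∑ u, ∑ v, (2 / Real.log 2) *
      ((bY P true u v - bU P true u * mUV P u v / mU P u)^2 / mUV P u v)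
      = (2 / Real.log 2) * ∑ u, ∑ v,
        (bY P true u v - bU P true u * mUV P u v / mU P u)^2 / mUV P u v := by
    rw [Finset.mul_sum]
    exact Finset.sum_congr rfl fun u _ => by rw [Finset.mul_sum]
  rw [hfac] at hs
  have hQle := le_trans hs hS'
  rw [div_mul_eq_mul_div, div_le_iff₀ hL2] at hQle
  linarith

end Bounds

end ESK

namespace ESK

section Assembly

open Real Finset

variable {U V : Type} [Fintype U] [Fintype V]

lemma div_le_div_right' {a b c : ℝ} (h : a ≤ b) (hc : 0 ≤ c) : a / c ≤ b / c := by
  rw [div_eq_mul_inv, div_eq_mul_inv]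
  exact mul_le_mul_of_nonneg_right h (inv_nonneg.mpr hc)

variable (P : Bool × Bool × U × V → ℝ)

lemma payoff_eq (z : U → Bool) :
    ∑ q : Bool × Bool × U × V, P q * ((if q.1 = q.2.1 then (1:ℝ) else 0)
        - (if z q.2.2.1 = q.2.1 then 1 else 0))
      = (∑ u, ∑ v, (P (true, true, u, v) + P (false, false, u, v)))
        - ∑ u, bU P (z u) u := by
  have h1 : ∑ u, ∑ v, ∑ x, ∑ y, P (x, y, u, v) * (if x = y then (1:ℝ) else 0)
      = ∑ u, ∑ v, (P (true, true, u, v) + P (false, false, u, v)) := by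
    refine Finset.sum_congr rfl fun u _ => Finset.sum_congr rfl fun v _ => ?_
    simp [Fintype.sum_bool]
  have h2 : ∑ u, ∑ v, ∑ x, ∑ y, P (x, y, u, v) * (if z u = y then (1:ℝ) else 0)
      = ∑ u, bU P (z u) u := by
    refine Finset.sum_congr rfl fun u _ => ?_
    cases hz : z u <;>
      simp [hz, Fintype.sum_bool, bU, bY]
  rw [sum4, sum4_comm]
  simp only [mul_sub, Finset.sum_sub_distrib]
  rw [h1, h2]

lemma G_le (hP0 : ∀ q, 0 ≤ P q)
    (hCI : ∀ x y u v, P (x, y, u, v) * mUV P u v = aX P x u v * bY P y u v) :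
    ∀ u v, P (true, true, u, v) + P (false, false, u, v)
      ≤ mUV P u v / 2 + 2 * (aX P true u v - mUV P u v / 2)
          * (bY P true u v - mUV P u v / 2) / mUV P u v := by
  intro u v
  rcases eq_or_lt_of_le (mUV_nonneg P hP0 u v) with hm | hm
  · have h1 : P (true, true, u, v) = 0 := by
      have ha := P_le_aX P hP0 true true u v
      have hb := aX_le P hP0 true u v
      have := hP0 (true, true, u, v)
      rw [← hm] at hb
      linarith
    have h2 : P (false, false, u, v) = 0 := by
      have ha := P_le_aX P hP0 false false u v
      have hb := aX_le P hP0 false u v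
      have := hP0 (false, false, u, v)
      rw [← hm] at hb
      linarith
    have ha0 : aX P true u v = 0 := aX_eq_zero P hP0 hm.symm true
    have hb0 : bY P true u v = 0 := bY_eq_zero P hP0 hm.symm true
    rw [h1, h2, ← hm, ha0, hb0]
    norm_num
  · have hmne := ne_of_gt hm
    have hCt := hCI true true u v
    have hCf := hCI false false u v
    have hfa : aX P false u v = mUV P u v - aX P true u v := by
      have := mUV_aX P u v; linarith
    have hfb : bY P false u v = mUV P u v - bY P true u v := by
      have := mUV_bY P u v; linarith
    rw [hfa, hfb] at hCf
    have e1 : P (true, true, u, v) = aX P true u v * bY P true u v / mUV P u v := by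
      rw [eq_div_iff hmne]; exact hCt
    have e1' : P (false, false, u, v) = (mUV P u v - aX P true u v)
        * (mUV P u v - bY P true u v) / mUV P u v := by
      rw [eq_div_iff hmne]; exact hCf
    rw [e1, e1']
    apply le_of_eq
    field_simp
    ring

lemma core_upper (hP0 : ∀ q, 0 ≤ P q)
    (hXhalf : ∀ x, ∑ y, ∑ u, ∑ v, P (x, y, u, v) = 1/2)
    (hCI : ∀ x y u v, P (x, y, u, v) * mUV P u v = aX P x u v * bY P y u v)
    (hI1 : mutualInfo P (fun q => q.1) (fun q => q.2.2) ≤ 1/4)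
    (hI2 : condMutualInfo P (fun q => (q.1, q.2.1)) (fun q => q.2.2.2)
        (fun q => q.2.2.1) ≤ 1/4) :
    ∃ z : U → Bool, ∑ q : Bool × Bool × U × V, P q * ((if q.1 = q.2.1 then (1:ℝ) else 0)
        - (if z q.2.2.1 = q.2.1 then 1 else 0)) ≤ Real.log 2 / 4 := by
  classical
  have hL2 : 0 < Real.log 2 := Real.log_pos (by norm_num)
  refine ⟨fun u => if mU P u ≤ 2 * bU P true u then true else false, ?_⟩
  have hpe := payoff_eq P (fun u => if mU P u ≤ 2 * bU P true u then true else false)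
  rw [hpe]
  -- total masses
  have h1tot : ∑ x, ∑ y, ∑ u, ∑ v, P (x, y, u, v) = 1 := by
    rw [Fintype.sum_bool, hXhalf true, hXhalf false]
    norm_num
  have htot : ∑ u, ∑ v, mUV P u v = 1 := by
    simp only [mUV]
    rw [← sum4_comm]
    exact h1tot
  have hmUtot : ∑ u, mU P u = 1 := by
    simp only [mU]
    exact htot
  -- adversary bound
  have hADV : ∑ u, (mU P u / 2 + |bU P true u - mU P u / 2|)
      ≤ ∑ u, bU P (if mU P u ≤ 2 * bU P true u then true else false) u := by
    refine Finset.sum_le_sum fun u _ => ?_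
    by_cases h : mU P u ≤ 2 * bU P true u
    · rw [if_pos h, abs_of_nonneg (by linarith)]
      linarith
    · push_neg at h
      rw [if_neg (not_le.mpr h), abs_of_nonpos (by linarith)]
      rw [show bU P false u = mU P u - bU P true u from by have := mU_bU P u; linarith]
      linarith
  -- decoder bound
  have hG : ∑ u, ∑ v, (P (true, true, u, v) + P (false, false, u, v))
      ≤ 1/2 + ∑ u, ∑ v, 2 * (aX P true u v - mUV P u v / 2)
          * (bY P true u v - mUV P u v / 2) / mUV P u v := by
    have hstep : ∑ u, ∑ v, (P (true, true, u, v) + P (false, false, u, v))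
        ≤ ∑ u, ∑ v, (mUV P u v / 2 + 2 * (aX P true u v - mUV P u v / 2)
            * (bY P true u v - mUV P u v / 2) / mUV P u v) :=
      Finset.sum_le_sum fun u _ => Finset.sum_le_sum fun v _ => G_le P hP0 hCI u v
    have hsp : ∑ u, ∑ v, (mUV P u v / 2 + 2 * (aX P true u v - mUV P u v / 2)
            * (bY P true u v - mUV P u v / 2) / mUV P u v)
        = (∑ u, ∑ v, mUV P u v) / 2 + ∑ u, ∑ v, 2 * (aX P true u v - mUV P u v / 2)
            * (bY P true u v - mUV P u v / 2) / mUV P u v := by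
      rw [Finset.sum_div, ← Finset.sum_add_distrib]
      refine Finset.sum_congr rfl fun u _ => ?_
      rw [Finset.sum_div, ← Finset.sum_add_distrib]
    rw [hsp, htot] at hstep
    linarith
  -- splitting the correlation term
  have hsplit : ∀ u, ∑ v, 2 * (aX P true u v - mUV P u v / 2)
        * (bY P true u v - mUV P u v / 2) / mUV P u v
      ≤ (∑ v, 2 * (aX P true u v - mUV P u v / 2)
          * (bY P true u v - bU P true u * mUV P u v / mU P u) / mUV P u v)
        + |bU P true u - mU P u / 2| := by
    intro u
    rcases eq_or_lt_of_le (mU_nonneg P hP0 u) with hm0 | hm0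
    · have hv0 : ∀ v, mUV P u v = 0 := by
        intro v
        have h1 := mUV_nonneg P hP0 u v
        have h2 := mUV_le_mU P hP0 u v
        rw [← hm0] at h2; linarith
      have hbU0 : bU P true u = 0 := by
        have h1 := bU_nonneg P hP0 true u
        have h2 := bU_le P hP0 true u
        rw [← hm0] at h2; linarith
      simp [hv0, hbU0, ← hm0]
    · have hmUne := ne_of_gt hm0
      have hper : ∀ v, 2 * (aX P true u v - mUV P u v / 2)
            * (bY P true u v - mUV P u v / 2) / mUV P u v
          ≤ 2 * (aX P true u v - mUV P u v / 2)
              * (bY P true u v - bU P true u * mUV P u v / mU P u) / mUV P u v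
            + mUV P u v * |bU P true u - mU P u / 2| / mU P u := by
        intro v
        rcases eq_or_lt_of_le (mUV_nonneg P hP0 u v) with hm | hm
        · rw [← hm]
          simp
        · have hmne := ne_of_gt hm
          have heq : 2 * (aX P true u v - mUV P u v / 2)
                * (bY P true u v - mUV P u v / 2) / mUV P u v
              = 2 * (aX P true u v - mUV P u v / 2)
                  * (bY P true u v - bU P true u * mUV P u v / mU P u) / mUV P u v
                + 2 * (aX P true u v - mUV P u v / 2)
                  * (bU P true u - mU P u / 2) / mU P u := by
            field_simp
            ring
          rw [heq]
          have habs : |2 * (aX P true u v - mUV P u v / 2)| ≤ mUV P u v := by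
            rw [abs_le]
            constructor
            · have := aX_nonneg P hP0 true u v; linarith
            · have := aX_le P hP0 true u v; linarith
          have hb1 : 2 * (aX P true u v - mUV P u v / 2) * (bU P true u - mU P u / 2)
                / mU P u
              ≤ mUV P u v * |bU P true u - mU P u / 2| / mU P u := by
            apply div_le_div_right' _ (mU_nonneg P hP0 u)
            calc 2 * (aX P true u v - mUV P u v / 2) * (bU P true u - mU P u / 2)
                ≤ |2 * (aX P true u v - mUV P u v / 2) * (bU P true u - mU P u / 2)| :=
                  le_abs_self _
              _ = |2 * (aX P true u v - mUV P u v / 2)| * |bU P true u - mU P u / 2| :=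
                  abs_mul _ _
              _ ≤ mUV P u v * |bU P true u - mU P u / 2| :=
                  mul_le_mul_of_nonneg_right habs (abs_nonneg _)
          linarith
      calc ∑ v, 2 * (aX P true u v - mUV P u v / 2)
            * (bY P true u v - mUV P u v / 2) / mUV P u v
          ≤ ∑ v, (2 * (aX P true u v - mUV P u v / 2)
              * (bY P true u v - bU P true u * mUV P u v / mU P u) / mUV P u v
            + mUV P u v * |bU P true u - mU P u / 2| / mU P u) :=
            Finset.sum_le_sum fun v _ => hper v
        _ = (∑ v, 2 * (aX P true u v - mUV P u v / 2)
              * (bY P true u v - bU P true u * mUV P u v / mU P u) / mUV P u v)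
            + (∑ v, mUV P u v) * |bU P true u - mU P u / 2| / mU P u := by
            rw [Finset.sum_add_distrib]
            congr 1
            rw [← Finset.sum_div, ← Finset.sum_mul]
        _ = (∑ v, 2 * (aX P true u v - mUV P u v / 2)
              * (bY P true u v - bU P true u * mUV P u v / mU P u) / mUV P u v)
            + |bU P true u - mU P u / 2| := by
            rw [show (∑ v, mUV P u v) = mU P u from rfl]
            rw [mul_comm, mul_div_assoc, div_self hmUne, mul_one]
  -- Cauchy–Schwarz
  have hq1 := C1_bound P hP0 hXhalf hI1
  have hq2 := C2_bound P hP0 hI2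
  have hQ1nn : (0:ℝ) ≤ ∑ u, ∑ v, (aX P true u v - mUV P u v / 2)^2 / mUV P u v :=
    Finset.sum_nonneg fun u _ => Finset.sum_nonneg fun v _ =>
      div_nonneg (sq_nonneg _) (mUV_nonneg P hP0 u v)
  have hQ2nn : (0:ℝ) ≤ ∑ u, ∑ v,
      (bY P true u v - bU P true u * mUV P u v / mU P u)^2 / mUV P u v :=
    Finset.sum_nonneg fun u _ => Finset.sum_nonneg fun v _ =>
      div_nonneg (sq_nonneg _) (mUV_nonneg P hP0 u v)
  have hCS : ∑ u, ∑ v, 2 * (aX P true u v - mUV P u v / 2)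
        * (bY P true u v - bU P true u * mUV P u v / mU P u) / mUV P u v
      ≤ Real.log 2 / 4 := by
    set f : U × V → ℝ := fun i => |aX P true i.1 i.2 - mUV P i.1 i.2 / 2|
        / Real.sqrt (mUV P i.1 i.2) with hf
    set g : U × V → ℝ := fun i => |bY P true i.1 i.2
        - bU P true i.1 * mUV P i.1 i.2 / mU P i.1| / Real.sqrt (mUV P i.1 i.2) with hg
    have hfg : ∀ u v, 2 * (aX P true u v - mUV P u v / 2)
          * (bY P true u v - bU P true u * mUV P u v / mU P u) / mUV P u v
        ≤ 2 * (f (u, v) * g (u, v)) := by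
      intro u v
      rcases eq_or_lt_of_le (mUV_nonneg P hP0 u v) with hm | hm
      · rw [hf, hg]
        simp [← hm]
      · have h1 : f (u, v) * g (u, v)
            = |aX P true u v - mUV P u v / 2|
              * |bY P true u v - bU P true u * mUV P u v / mU P u| / mUV P u v := by
          rw [hf, hg]
          simp only
          rw [div_mul_div_comm, Real.mul_self_sqrt hm.le]
        rw [h1]
        have h2 := le_abs_self ((aX P true u v - mUV P u v / 2)
          * (bY P true u v - bU P true u * mUV P u v / mU P u))
        rw [abs_mul] at h2
        have h3 : 2 * (aX P true u v - mUV P u v / 2)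
            * (bY P true u v - bU P true u * mUV P u v / mU P u)
            ≤ 2 * (|aX P true u v - mUV P u v / 2|
              * |bY P true u v - bU P true u * mUV P u v / mU P u|) := by linarith
        calc 2 * (aX P true u v - mUV P u v / 2)
              * (bY P true u v - bU P true u * mUV P u v / mU P u) / mUV P u v
            ≤ 2 * (|aX P true u v - mUV P u v / 2|
              * |bY P true u v - bU P true u * mUV P u v / mU P u|) / mUV P u v :=
              div_le_div_right' h3 hm.le
          _ = 2 * (|aX P true u v - mUV P u v / 2|
              * |bY P true u v - bU P true u * mUV P u v / mU P u| / mUV P u v) := by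
              ring
    have hsq := Finset.sum_mul_sq_le_sq_mul_sq Finset.univ f g
    have hf2 : ∑ i : U × V, f i ^ 2
        = ∑ u, ∑ v, (aX P true u v - mUV P u v / 2)^2 / mUV P u v := by
      rw [Fintype.sum_prod_type]
      refine Finset.sum_congr rfl fun u _ => Finset.sum_congr rfl fun v _ => ?_
      rw [hf]
      simp only
      rw [div_pow, sq_abs, Real.sq_sqrt (mUV_nonneg P hP0 u v)]
    have hg2 : ∑ i : U × V, g i ^ 2
        = ∑ u, ∑ v, (bY P true u v - bU P true u * mUV P u v / mU P u)^2
            / mUV P u v := by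
      rw [Fintype.sum_prod_type]
      refine Finset.sum_congr rfl fun u _ => Finset.sum_congr rfl fun v _ => ?_
      rw [hg]
      simp only
      rw [div_pow, sq_abs, Real.sq_sqrt (mUV_nonneg P hP0 u v)]
    rw [hf2, hg2] at hsq
    have hfgnn : (0:ℝ) ≤ ∑ i : U × V, f i * g i :=
      Finset.sum_nonneg fun i _ => mul_nonneg
        (div_nonneg (abs_nonneg _) (Real.sqrt_nonneg _))
        (div_nonneg (abs_nonneg _) (Real.sqrt_nonneg _))
    have hfgle : ∑ i : U × V, f i * g i ≤ Real.log 2 / 8 := by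
      nlinarith [hsq, hq1, hq2, hQ1nn, hQ2nn, hfgnn, hL2]
    calc ∑ u, ∑ v, 2 * (aX P true u v - mUV P u v / 2)
          * (bY P true u v - bU P true u * mUV P u v / mU P u) / mUV P u v
        ≤ ∑ u, ∑ v, 2 * (f (u, v) * g (u, v)) :=
          Finset.sum_le_sum fun u _ => Finset.sum_le_sum fun v _ => hfg u v
      _ = 2 * ∑ i : U × V, f i * g i := by
          rw [Fintype.sum_prod_type, Finset.mul_sum]
          exact Finset.sum_congr rfl fun u _ => by rw [Finset.mul_sum]
      _ ≤ 2 * (Real.log 2 / 8) := by linarith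
      _ = Real.log 2 / 4 := by ring
  -- final assembly
  have hsplitsum : ∑ u, ∑ v, 2 * (aX P true u v - mUV P u v / 2)
        * (bY P true u v - mUV P u v / 2) / mUV P u v
      ≤ (∑ u, ∑ v, 2 * (aX P true u v - mUV P u v / 2)
          * (bY P true u v - bU P true u * mUV P u v / mU P u) / mUV P u v)
        + ∑ u, |bU P true u - mU P u / 2| := by
    rw [← Finset.sum_add_distrib]
    exact Finset.sum_le_sum fun u _ => hsplit u
  have hADV2 : 1/2 + ∑ u, |bU P true u - mU P u / 2|
      ≤ ∑ u, bU P (if mU P u ≤ 2 * bU P true u then true else false) u := by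
    have he : ∑ u, (mU P u / 2 + |bU P true u - mU P u / 2|)
        = (∑ u, mU P u) / 2 + ∑ u, |bU P true u - mU P u / 2| := by
      rw [Finset.sum_add_distrib, Finset.sum_div]
    rw [he, hmUtot] at hADV
    linarith
  linarith

end Assembly

end ESK

namespace ESK

section Final

open Real Finset

/-- The source distribution: a uniform bit. -/
def p0 : Bool → ℝ := fun _ => 1/2

/-- The payoff: reward for matching the source, penalty when the adversary guesses
the action. -/
def pay : Bool → Bool → Bool → ℝ :=
  fun x y z => (if x = y then (1:ℝ) else 0) - (if z = y then 1 else 0)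

lemma p0_pmf : IsPMF p0 := by
  constructor
  · intro a; simp [p0]
  · norm_num [p0, Fintype.sum_bool]

lemma slJoint_total {U V : Type} [Fintype U] [Fintype V]
    (w : Bool → Bool × U × V → ℝ) (hw : ∀ x, IsPMF (w x)) :
    ∑ q : Bool × Bool × U × V, slJoint p0 w q = 1 := by
  have h : ∀ x, ∑ y, ∑ u, ∑ v, slJoint p0 w (x, y, u, v) = 1/2 := by
    intro x
    have hsum := (hw x).2
    rw [show (∑ r : Bool × U × V, w x r) = ∑ y, ∑ u, ∑ v, w x (y, u, v) from by
      simp only [Fintype.sum_prod_type]] at hsum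
    have : ∑ y, ∑ u, ∑ v, slJoint p0 w (x, y, u, v)
        = 1/2 * ∑ y, ∑ u, ∑ v, w x (y, u, v) := by
      simp only [slJoint, p0, ← Finset.mul_sum]
    rw [this, hsum]
    norm_num
  rw [sum4, Fintype.sum_bool, h true, h false]
  norm_num

lemma slJoint_half {U V : Type} [Fintype U] [Fintype V]
    (w : Bool → Bool × U × V → ℝ) (hw : ∀ x, IsPMF (w x)) (x : Bool) :
    ∑ y, ∑ u, ∑ v, slJoint p0 w (x, y, u, v) = 1/2 := by
  have hsum := (hw x).2
  rw [show (∑ r : Bool × U × V, w x r) = ∑ y, ∑ u, ∑ v, w x (y, u, v) from by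
    simp only [Fintype.sum_prod_type]] at hsum
  have h : ∑ y, ∑ u, ∑ v, slJoint p0 w (x, y, u, v)
      = 1/2 * ∑ y, ∑ u, ∑ v, w x (y, u, v) := by
    simp only [slJoint, p0, ← Finset.mul_sum]
  rw [h, hsum]
  norm_num

/-- Every member of the single-letter value set is at most `1`. -/
lemma gamma_set_le_one (R0 R : ℝ) (v : ℝ)
    (hv : v ∈ {v : ℝ | ∃ (U V : Type) (_ : Fintype U) (_ : Fintype V)
      (w : Bool → Bool × U × V → ℝ), memP p0 w R0 R ∧
      v = ⨅ z : U → Bool, slPayoff p0 w pay z}) : v ≤ 1 := by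
  obtain ⟨U, V, hU, hV, w, hmem, rfl⟩ := hv
  letI := hU; letI := hV
  have hle : ∀ z : U → Bool, slPayoff p0 w pay z ≤ 1 := by
    intro z
    have h1 : slPayoff p0 w pay z ≤ ∑ q : Bool × Bool × U × V, slJoint p0 w q := by
      apply Finset.sum_le_sum
      intro q _
      have hq : 0 ≤ slJoint p0 w q :=
        mul_nonneg (by norm_num [p0]) ((hmem.1 q.1).1 q.2)
      have hπ : pay q.1 q.2.1 (z q.2.2.1) ≤ 1 := by
        unfold pay; split <;> split <;> norm_num
      calc slJoint p0 w q * pay q.1 q.2.1 (z q.2.2.1) ≤ slJoint p0 w q * 1 :=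
            mul_le_mul_of_nonneg_left hπ hq
        _ = slJoint p0 w q := mul_one _
    rw [slJoint_total w hmem.1] at h1
    exact h1
  refine le_trans (ciInf_le ?_ (fun _ => true)) (hle _)
  apply Set.Finite.bddBelow
  exact Set.finite_range _

/-- Upper bound on the single-letter value at equal rates `R₀ = R = 1/4`. -/
lemma gamma_upper : Gamma p0 pay (1/4) (1/4) ≤ Real.log 2 / 4 := by
  apply Real.sSup_le
  · rintro v ⟨U, V, hU, hV, w, hmem, rfl⟩
    letI := hU; letI := hV
    obtain ⟨hwpmf, hCIw, hR0, hR⟩ := hmem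
    have hP0 : ∀ q : Bool × Bool × U × V, 0 ≤ slJoint p0 w q := fun q =>
      mul_nonneg (by norm_num [p0]) ((hwpmf q.1).1 q.2)
    have hXhalf := slJoint_half w hwpmf
    have hCI : ∀ x y u v, slJoint p0 w (x, y, u, v) * mUV (slJoint p0 w) u v
        = aX (slJoint p0 w) x u v * bY (slJoint p0 w) y u v := by
      intro x y u v
      have h := hCIw x y (u, v)
      simp only [prId, prUV, prXUV, prYUV] at h
      exact h
    obtain ⟨z, hz⟩ := core_upper (slJoint p0 w) hP0 hXhalf hCI hR hR0
    refine le_trans (ciInf_le ?_ z) ?_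
    · apply Set.Finite.bddBelow
      exact Set.finite_range _
    · exact hz
  · have := Real.log_nonneg (by norm_num : (1:ℝ) ≤ 2)
    linarith

/-! ### The explicit scheme achieving `1/4` with excess key -/

/-- The conditional distribution: `V = Y`, `U` trivial and `P(Y = X) = 3/4`. -/
def w0 : Bool → Bool × Unit × Bool → ℝ :=
  fun x r => if r.2.2 = r.1 then (if r.1 = x then 3/4 else 1/4) else 0

lemma w0_pmf : ∀ x, IsPMF (w0 x) := by
  intro x
  constructor
  · intro r
    rcases r with ⟨y, u, v⟩
    show (0:ℝ) ≤ if v = y then (if y = x then 3/4 else 1/4) else 0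
    split
    · split <;> norm_num
    · norm_num
  · cases x <;>
      simp [w0, Fintype.sum_prod_type, Fintype.sum_bool] <;> norm_num

lemma logb12 : Real.logb 2 (1/2 : ℝ) = -1 := by
  rw [show (1/2:ℝ) = 2⁻¹ by norm_num, Real.logb_inv,
    Real.logb_self_eq_one (by norm_num)]

lemma logb18 : Real.logb 2 (1/8 : ℝ) = -3 := by
  rw [show (1/8:ℝ) = (2:ℝ)⁻¹ * ((2:ℝ)⁻¹ * (2:ℝ)⁻¹) by norm_num]
  rw [Real.logb_mul (by norm_num) (by norm_num), Real.logb_mul (by norm_num) (by norm_num)]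
  rw [Real.logb_inv, Real.logb_self_eq_one (by norm_num)]
  norm_num

lemma logb38 : Real.logb 2 (3/8 : ℝ) = Real.logb 2 3 - 3 := by
  rw [show (3/8:ℝ) = 3 * (1/8) by norm_num]
  rw [Real.logb_mul (by norm_num) (by norm_num), logb18]
  ring

lemma logb3_le : Real.logb 2 3 ≤ 5/3 := by
  have hl2 : 0 < Real.log 2 := Real.log_pos (by norm_num)
  rw [Real.logb, div_le_iff₀ hl2]
  have h27 : Real.log 27 = 3 * Real.log 3 := by
    rw [show (27:ℝ) = 3^(3:ℕ) by norm_num, Real.log_pow]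
    push_cast; ring
  have h32 : Real.log 32 = 5 * Real.log 2 := by
    rw [show (32:ℝ) = 2^(5:ℕ) by norm_num, Real.log_pow]
    push_cast; ring
  have hle : Real.log 27 ≤ Real.log 32 :=
    Real.log_le_log (by norm_num) (by norm_num)
  rw [h27, h32] at hle
  linarith

lemma w0_mem : memP p0 w0 2 (1/4) := by
  have hP0 : ∀ q : Bool × Bool × Unit × Bool, 0 ≤ slJoint p0 w0 q := fun q =>
    mul_nonneg (by norm_num [p0]) ((w0_pmf q.1).1 q.2)
  have hXhalf := slJoint_half w0 w0_pmf
  refine ⟨w0_pmf, ?_, ?_, ?_⟩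
  · -- conditional independence
    intro x y c
    obtain ⟨u, v⟩ := c
    simp only [prId, prUV, prXUV, prYUV]
    simp only [mUV, aX, bY, slJoint, w0, p0]
    cases x <;> cases y <;> cases v <;>
      norm_num [Fintype.sum_bool]
  · -- key rate: I(XY;V|U) = 1 ≤ 2
    rw [ge_iff_le, CMI_form]
    simp only [mUV, mU, tXY, slJoint, w0, p0]
    simp [Fintype.sum_bool]
    norm_num [logb12]
  · -- communication rate: I(X;UV) = (3/4) log 3 - 1 ≤ 1/4
    rw [ge_iff_le, MI_form _ hXhalf]
    simp only [mUV, aX, slJoint, w0, p0]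
    simp [Fintype.sum_bool]
    norm_num [logb38, logb18, logb12]
    linarith [logb3_le]

lemma w0_value : (⨅ z : Unit → Bool, slPayoff p0 w0 pay z) = 1/4 := by
  have hval : ∀ z : Unit → Bool, slPayoff p0 w0 pay z = 1/4 := by
    intro z
    cases hz : z () <;>
      simp [slPayoff, slJoint, w0, p0, pay, Fintype.sum_prod_type,
        Fintype.sum_bool, hz] <;> norm_num
  rw [iInf_congr hval]
  exact ciInf_const

lemma gamma_lower : (1/4 : ℝ) ≤ Gamma p0 pay 2 (1/4) := by
  apply le_csSup
  · exact ⟨1, fun v hv => gamma_set_le_one 2 (1/4) v hv⟩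
  · exact ⟨Unit, Bool, inferInstance, inferInstance, w0, w0_mem, w0_value.symm⟩

end Final

end ESK

/-- **Excess secret key can be useful.**  There are finite alphabets, a source pmf, a payoff
function and rates `R ≥ 0`, `R₀ > R` such that `Γ_{p₀,π}(R₀,R) > Γ_{p₀,π}(R,R)`: a secret key
rate strictly exceeding the public communication rate strictly beats a key rate equal to the
communication rate. -/
theorem excess_secret_key_useful :
    ∃ (X Y Z : Type) (_ : Fintype X) (_ : Fintype Y) (_ : Fintype Z)
      (_ : Nonempty X) (_ : Nonempty Y) (_ : Nonempty Z)
      (p0 : X → ℝ) (_ : IsPMF p0) (π : X → Y → Z → ℝ) (R R0 : ℝ),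
      0 ≤ R ∧ R < R0 ∧ Gamma p0 π R0 R > Gamma p0 π R R := by
  refine ⟨Bool, Bool, Bool, inferInstance, inferInstance, inferInstance,
    ⟨true⟩, ⟨true⟩, ⟨true⟩, ESK.p0, ESK.p0_pmf, ESK.pay, 1/4, 2,
    by norm_num, by norm_num, ?_⟩
  have h1 := ESK.gamma_upper
  have h2 := ESK.gamma_lower
  have h3 : Real.log 2 < 0.6931471808 := Real.log_two_lt_d9
  have h4 : Real.log 2 / 4 < 1/4 := by linarith
  linarith

end
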